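/- arXiv:2210.10125 — 2 statements merged into one kernel-verified Lean document; each statement's English description precedes it below -/
import Mathlib

section
/- Let S, A₁, A₂ be types with a policy for agent i being a function S → PMF(Aᵢ) (a map from states to probability mass functions over actions). Let π¹ : ℝⁿ → (S → PMF A₁) and π² : ℝᵐ → (S → PMF A₂) be parameterization maps, let L¹, L² : (S → PMF A₁) → (S → PMF A₂) → ℝ be loss functionals, let D¹ : (S → PMF A₁) → (S → PMF A₁) → ℝ and D² : (S → PMF A₂) → (S → PMF A₂) → ℝ be divergence functionals, and let β_in, β_out ∈ ℝ. Suppose: (i) for every θ¹'' ∈ ℝⁿ and θ² ∈ ℝᵐ, the inner objective θ²'' ↦ L²(π¹(θ¹''), π²(θ²'')) + β_in · D²(π²(θ²), π²(θ²'')) has a unique global minimizer θ²'(θ¹'', θ²) ∈ ℝᵐ; and (ii) for every θ¹ ∈ ℝⁿ and θ² ∈ ℝᵐ, the outer objective θ¹'' ↦ L¹(π¹(θ¹''), π²(θ²'(θ¹'', θ²))) + β_out · D¹(π¹(θ¹), π¹(θ¹'')) has a unique global minimizer u(θ¹, θ²) ∈ ℝⁿ. Then the POLA update rule u is invariant to policy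 parameterization: for all θ^{1a}, θ^{1b} ∈ ℝⁿ and θ^{2a}, θ^{2b} ∈ ℝᵐ such that π¹(θ^{1a}) = π¹(θ^{1b}) and π²(θ^{2a}) = π²(θ^{2b}), it holds that π¹(u(θ^{1a}, θ^{2a})) = π¹(u(θ^{1b}, θ^{2b})). -/
/-- The ideal POLA update rule is invariant to policy parameterization: if the inner and
outer proximal objectives each have a unique global minimizer, then behaviourally
equivalent starting policies yield behaviourally equivalent updated policies. -/
theorem stmt_1 {n m : ℕ} {S A₁ A₂ : Type*}
    (π1 : (Fin n → ℝ) → S → PMF A₁) (π2 : (Fin m → ℝ) → S → PMF A₂)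
    (L1 : (S → PMF A₁) → (S → PMF A₂) → ℝ)
    (L2 : (S → PMF A₁) → (S → PMF A₂) → ℝ)
    (D1 : (S → PMF A₁) → (S → PMF A₁) → ℝ)
    (D2 : (S → PMF A₂) → (S → PMF A₂) → ℝ)
    (βin βout : ℝ)
    (θ2' : (Fin n → ℝ) → (Fin m → ℝ) → (Fin m → ℝ))
    -- (i) θ2' θ1'' θ2 is the unique global minimizer of the inner objective
    (h_inner : ∀ θ1'' θ2, ∀ x, x ≠ θ2' θ1'' θ2 →
      L2 (π1 θ1'') (π2 (θ2' θ1'' θ2)) + βin * D2 (π2 θ2) (π2 (θ2' θ1'' θ2)) <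
        L2 (π1 θ1'') (π2 x) + βin * D2 (π2 θ2) (π2 x))
    (u : (Fin n → ℝ) → (Fin m → ℝ) → (Fin n → ℝ))
    -- (ii) u θ1 θ2 is the unique global minimizer of the outer objective
    (h_outer : ∀ θ1 θ2, ∀ x, x ≠ u θ1 θ2 →
      L1 (π1 (u θ1 θ2)) (π2 (θ2' (u θ1 θ2) θ2)) + βout * D1 (π1 θ1) (π1 (u θ1 θ2)) <
        L1 (π1 x) (π2 (θ2' x θ2)) + βout * D1 (π1 θ1) (π1 x)) :
    ∀ θ1a θ1b : Fin n → ℝ, ∀ θ2a θ2b : Fin m → ℝ,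
      π1 θ1a = π1 θ1b → π2 θ2a = π2 θ2b →
      π1 (u θ1a θ2a) = π1 (u θ1b θ2b) := by
  intro θ1a θ1b θ2a θ2b h1 h2
  have hinner : ∀ θ1'', θ2' θ1'' θ2a = θ2' θ1'' θ2b := by
    intro θ1''
    by_contra hne
    have ha := h_inner θ1'' θ2b (θ2' θ1'' θ2a) hne
    have hb := h_inner θ1'' θ2a (θ2' θ1'' θ2b) (Ne.symm hne)
    rw [h2] at hb
    linarith
  have houter : u θ1a θ2a = u θ1b θ2b := by
    by_contra hne
    have ha := h_outer θ1b θ2b (u θ1a θ2a) hne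
    have hb := h_outer θ1a θ2a (u θ1b θ2b) (Ne.symm hne)
    rw [hinner (u θ1a θ2a), hinner (u θ1b θ2b), h1] at hb
    linarith
  rw [houter]
end

section
/- Let L¹ : ℝⁿ × ℝᵐ → ℝ and L² : ℝⁿ × ℝᵐ → ℝ, let λ > 0 and set β = 1/(2λ). Fix θ¹ ∈ ℝⁿ and θ² ∈ ℝᵐ. Assume that for every θ¹'' ∈ ℝⁿ the map θ ↦ L²(θ¹'', θ) is differentiable at θ², and define the inner update via the proximal operator on the first-order approximation of the inner objective with squared L2 parameter penalty: θ²'(θ¹'') = argmin_{θ²''} ( L²(θ¹'', θ²) + ⟪∇_{θ²}L²(θ¹'', θ²), θ²'' − θ²⟫ + β‖θ² − θ²''‖² ), so that θ²'(θ¹'') = θ² − λ∇_{θ²}L²(θ¹'', θ²). Define f¹(θ) = L¹(θ, θ²'(θ)) and assume f¹ is differentiable at θ¹. Then the POLA update with the divergence on policies replaced by the squared L2 norm on policy parameters and with first-order approximation of the outer objective, namely argmin_{θ¹''} ( f¹(θ¹) + ⟪∇f¹(θ¹), θ¹'' − θ¹⟫ + β‖θ¹ − θ¹''‖² ), has the unique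 minimizer θ¹ − λ∇f¹(θ¹), which is exactly the LOLA update θ¹ − λ∇_{θ¹} L¹(θ¹, θ² − λ∇_{θ²}L²(θ¹, θ²)). In other words, POLA reduces to LOLA when the divergence on policies is replaced by the L2 norm on policy parameters and first-order approximations of both agents' objectives are used. -/
open scoped RealInnerProductSpace

lemma quad_le {E : Type*} [NormedAddCommGroup E] [InnerProductSpace ℝ E]
    (lam β : ℝ) (hlam : 0 < lam) (hβ : β = 1 / (2 * lam)) (g θ x : E) :
    ⟪g, (θ - lam • g) - θ⟫ + β * ‖θ - (θ - lam • g)‖ ^ 2 ≤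
      ⟪g, x - θ⟫ + β * ‖θ - x‖ ^ 2 + (-β) * ‖x - θ + lam • g‖ ^ 2 := by
  have hβ' : 2 * β * lam = 1 := by rw [hβ]; field_simp
  have hβpos : 0 < β := by rw [hβ]; positivity
  have expand : ‖x - θ + lam • g‖ ^ 2
      = ‖x - θ‖ ^ 2 + 2 * (lam * ⟪g, x - θ⟫) + lam ^ 2 * ‖g‖ ^ 2 := by
    rw [norm_add_sq_real, real_inner_smul_right, norm_smul, real_inner_comm,
      Real.norm_eq_abs, abs_of_pos hlam]
    ring
  have h1 : (θ - lam • g) - θ = -(lam • g) := by abel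
  have h2 : θ - (θ - lam • g) = lam • g := by abel
  have h3 : ⟪g, -(lam • g)⟫ = -(lam * ‖g‖ ^ 2) := by
    rw [inner_neg_right, real_inner_smul_right, real_inner_self_eq_norm_sq]
  have h4 : ‖lam • g‖ ^ 2 = lam ^ 2 * ‖g‖ ^ 2 := by
    rw [norm_smul, Real.norm_eq_abs, abs_of_pos hlam]; ring
  have h5 : ‖θ - x‖ = ‖x - θ‖ := norm_sub_rev _ _
  rw [h1, h2, h3, h4, h5, expand]
  nlinarith [sq_nonneg (‖x - θ‖), sq_nonneg ‖g‖]

lemma quad_lt {E : Type*} [NormedAddCommGroup E] [InnerProductSpace ℝ E]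
    (lam β : ℝ) (hlam : 0 < lam) (hβ : β = 1 / (2 * lam)) (g θ x : E)
    (hx : x ≠ θ - lam • g) :
    ⟪g, (θ - lam • g) - θ⟫ + β * ‖θ - (θ - lam • g)‖ ^ 2 <
      ⟪g, x - θ⟫ + β * ‖θ - x‖ ^ 2 := by
  have hβpos : 0 < β := by rw [hβ]; positivity
  have hne : x - θ + lam • g ≠ 0 := by
    intro h
    apply hx
    have : x = θ - lam • g := by
      have := sub_eq_zero.mp (by rw [← h]; abel : x - (θ - lam • g) = 0)
      exact this
    exact this
  have hpos : 0 < ‖x - θ + lam • g‖ ^ 2 := pow_pos (norm_pos_iff.mpr hne) 2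
  have := quad_le lam β hlam hβ g θ x
  nlinarith

/-- POLA reduces to LOLA when the divergence on policies is replaced by the squared L2
norm on policy parameters and first-order approximations of both agents' objectives are
used: the inner proximal update equals the naive gradient step
`θ2' θ1'' = θ2 - lam • ∇_{θ²} L2 θ1'' θ2`, and the outer proximal objective's unique
minimizer is `θ1 - lam • ∇f¹(θ1)` — exactly the LOLA update on
`f¹(θ) = L1 θ (θ2 - lam • ∇_{θ²} L2 θ θ2)`. -/
theorem stmt_5 {n m : ℕ}
    (L1 L2 : EuclideanSpace ℝ (Fin n) → EuclideanSpace ℝ (Fin m) → ℝ)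
    (lam β : ℝ) (hlam : 0 < lam) (hβ : β = 1 / (2 * lam))
    (θ1 : EuclideanSpace ℝ (Fin n)) (θ2 : EuclideanSpace ℝ (Fin m))
    -- the map θ ↦ L2 θ1'' θ is differentiable at θ2 with gradient G2 θ1''
    (G2 : EuclideanSpace ℝ (Fin n) → EuclideanSpace ℝ (Fin m))
    (hG2 : ∀ θ1'', HasGradientAt (fun θ => L2 θ1'' θ) (G2 θ1'') θ2)
    -- the LOLA modified objective f¹(θ) = L1 θ (θ2 - lam • G2 θ) has gradient g1 at θ1
    (g1 : EuclideanSpace ℝ (Fin n))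
    (hf1 : HasGradientAt (fun θ => L1 θ (θ2 - lam • G2 θ)) g1 θ1) :
    -- inner: θ2 - lam • G2 θ1'' is the unique minimizer of the first-order inner
    -- objective with squared L2 parameter penalty
    (∀ θ1'' : EuclideanSpace ℝ (Fin n), ∀ y, y ≠ θ2 - lam • G2 θ1'' →
      L2 θ1'' θ2 + ⟪G2 θ1'', (θ2 - lam • G2 θ1'') - θ2⟫ +
          β * ‖θ2 - (θ2 - lam • G2 θ1'')‖ ^ 2 <
        L2 θ1'' θ2 + ⟪G2 θ1'', y - θ2⟫ + β * ‖θ2 - y‖ ^ 2) ∧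
    -- outer: θ1 - lam • g1 is the unique minimizer of the first-order outer objective
    -- with squared L2 parameter penalty, i.e. the LOLA update
    ((∀ x, L1 θ1 (θ2 - lam • G2 θ1) + ⟪g1, (θ1 - lam • g1) - θ1⟫ +
          β * ‖θ1 - (θ1 - lam • g1)‖ ^ 2 ≤
        L1 θ1 (θ2 - lam • G2 θ1) + ⟪g1, x - θ1⟫ + β * ‖θ1 - x‖ ^ 2) ∧
      (∀ x, x ≠ θ1 - lam • g1 →
        L1 θ1 (θ2 - lam • G2 θ1) + ⟪g1, (θ1 - lam • g1) - θ1⟫ +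
            β * ‖θ1 - (θ1 - lam • g1)‖ ^ 2 <
          L1 θ1 (θ2 - lam • G2 θ1) + ⟪g1, x - θ1⟫ + β * ‖θ1 - x‖ ^ 2)) := by
  refine ⟨fun θ1'' y hy => ?_, ⟨fun x => ?_, fun x hx => ?_⟩⟩
  · have := quad_lt lam β hlam hβ (G2 θ1'') θ2 y hy
    linarith
  · rcases eq_or_ne x (θ1 - lam • g1) with h | h
    · rw [h]
    · have := quad_lt lam β hlam hβ g1 θ1 x h
      linarith
  · have := quad_lt lam β hlam hβ g1 θ1 x hx
    linarith
end
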